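/- Fix a positive integer K ≥ 2 and positive rates N_1,...,N_K. For k = 1,...,K let V_k = {±(m − 1/2)·2^{∑_{ℓ<k} N_ℓ} : m = 1,...,2^{N_k−1}} be PAM sub-constellations. Define f₆(v) = 2 ∑_{ℓ=1}^{K−1} v_ℓ ∑_{k=ℓ+1}^{K} v_k for v ∈ V_1 × ... × V_K. Then f₆ is minimized at the point v* with v*_k = −(2^{N_k−1} − 1/2)·2^{∑_{ℓ<k} N_ℓ} for k < K and v*_K = +(2^{N_K−1} − 1/2)·2^{∑_{ℓ<K} N_ℓ} (equivalently, at its negation). -/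

import Mathlib

/-- The `k`-th PAM sub-constellation:
`V_k = {±(m - 1/2)·2^{∑_{ℓ<k} N_ℓ} : m = 1,…,2^{N_k-1}}`. -/
def pamSub {K : ℕ} (N : Fin K → ℕ) (k : Fin K) : Set ℝ :=
  {x : ℝ | ∃ m : ℕ, 1 ≤ m ∧ m ≤ 2 ^ (N k - 1) ∧
    (x = ((m : ℝ) - 1/2) * 2 ^ (∑ ℓ ∈ Finset.Iio k, N ℓ) ∨
     x = -(((m : ℝ) - 1/2) * 2 ^ (∑ ℓ ∈ Finset.Iio k, N ℓ)))}

/-- The cross-term objective `f₆(v) = 2 ∑_{ℓ} v_ℓ ∑_{k>ℓ} v_k`. -/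
def fSix {K : ℕ} (v : Fin K → ℝ) : ℝ :=
  2 * ∑ ℓ, v ℓ * ∑ k ∈ Finset.Ioi ℓ, v k

lemma sq_sum_identity : ∀ (n : ℕ) (v : Fin n → ℝ),
    2 * ∑ ℓ, v ℓ * ∑ k ∈ Finset.Ioi ℓ, v k = (∑ k, v k)^2 - ∑ k, (v k)^2 := by
  intro n
  induction n with
  | zero => intro v; simp
  | succ n ih =>
    intro v
    have IH := ih (v ∘ Fin.succ)
    simp only [Function.comp] at IH
    rw [Fin.sum_univ_succ (f := fun ℓ => v ℓ * ∑ k ∈ Finset.Ioi ℓ, v k),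
      Fin.sum_univ_succ v, Fin.sum_univ_succ (fun k => (v k)^2)]
    simp only [Fin.Ioi_zero_eq_map, Fin.Ioi_succ, Finset.sum_map]
    simp only [show ∀ x : Fin n, (Fin.succEmb n) x = x.succ from fun _ => rfl]
    linear_combination IH

lemma fSix_eq {n : ℕ} (v : Fin n → ℝ) :
    fSix v = (∑ k, v k)^2 - ∑ k, (v k)^2 := sq_sum_identity n v

lemma tele_nat (N' : ℕ → ℕ) : ∀ (K : ℕ), (∀ j < K, 0 < N' j) →
    ∑ j ∈ Finset.range K,
      (((2:ℝ)^(N' j - 1) - 1/2) * 2^(∑ i ∈ Finset.range j, N' i))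
    = ((2:ℝ)^(∑ i ∈ Finset.range K, N' i) - 1)/2 := by
  intro K
  induction K with
  | zero => intro _; simp
  | succ K ih =>
    intro h
    rw [Finset.sum_range_succ, Finset.sum_range_succ (f := N'),
      ih (fun j hj => h j (hj.trans (Nat.lt_succ_self K)))]
    have hpos := h K (Nat.lt_succ_self K)
    have h2 : (2:ℝ)^(N' K - 1) * 2 = 2^(N' K) := by
      rw [← pow_succ]; congr 1; omega
    rw [pow_add]
    have hp : (0:ℝ) < 2^(∑ i ∈ Finset.range K, N' i) := by positivity
    field_simp
    nlinarith [hp]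

/-- Bounds for elements of a PAM sub-constellation. -/
lemma pam_bounds {K : ℕ} (N : Fin K → ℕ) (k : Fin K) {x : ℝ} (hx : x ∈ pamSub N k) :
    (1/2) * 2^(∑ ℓ ∈ Finset.Iio k, N ℓ) ≤ |x| ∧
    |x| ≤ ((2:ℝ)^(N k - 1) - 1/2) * 2^(∑ ℓ ∈ Finset.Iio k, N ℓ) := by
  obtain ⟨m, h1, h2, hcase⟩ := hx
  have hm1 : (1:ℝ) ≤ (m:ℝ) := by exact_mod_cast h1
  have hm2 : (m:ℝ) ≤ (2:ℝ)^(N k - 1) := by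
    calc (m:ℝ) ≤ ((2^(N k - 1) : ℕ) : ℝ) := by exact_mod_cast h2
    _ = (2:ℝ)^(N k - 1) := by push_cast; ring
  have hP : (0:ℝ) < 2^(∑ ℓ ∈ Finset.Iio k, N ℓ) := by positivity
  have hpos : (0:ℝ) < ((m : ℝ) - 1/2) * 2 ^ (∑ ℓ ∈ Finset.Iio k, N ℓ) :=
    mul_pos (by linarith) hP
  have habs : |x| = ((m : ℝ) - 1/2) * 2 ^ (∑ ℓ ∈ Finset.Iio k, N ℓ) := by
    rcases hcase with h | h
    · rw [h, abs_of_pos hpos]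
    · rw [h, abs_neg, abs_of_pos hpos]
  rw [habs]
  constructor
  · apply mul_le_mul_of_nonneg_right (by linarith) hP.le
  · apply mul_le_mul_of_nonneg_right (by linarith) hP.le

set_option maxHeartbeats 1000000 in
theorem fSix_minimizer {K : ℕ} (hK : 1 ≤ K) (N : Fin (K + 1) → ℕ)
    (hN : ∀ k, 0 < N k) (vstar : Fin (K + 1) → ℝ)
    (hvstar : ∀ k, vstar k =
      if k = Fin.last K then
        (((2 : ℝ) ^ (N k - 1) - 1/2) * 2 ^ (∑ ℓ ∈ Finset.Iio k, N ℓ))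
      else
        -(((2 : ℝ) ^ (N k - 1) - 1/2) * 2 ^ (∑ ℓ ∈ Finset.Iio k, N ℓ))) :
    (∀ k, vstar k ∈ pamSub N k) ∧
    ∀ v : Fin (K + 1) → ℝ, (∀ k, v k ∈ pamSub N k) → fSix vstar ≤ fSix v := by
  -- the magnitude bound for each sub-constellation
  set M : Fin (K + 1) → ℝ :=
    fun k => ((2:ℝ)^(N k - 1) - 1/2) * 2^(∑ ℓ ∈ Finset.Iio k, N ℓ) with hM
  -- membership of vstar
  have hmem : ∀ k, vstar k ∈ pamSub N k := by
    intro k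
    refine ⟨2 ^ (N k - 1), Nat.one_le_two_pow, le_refl _, ?_⟩
    rw [hvstar k]
    by_cases h : k = Fin.last K
    · left; rw [if_pos h]; push_cast; ring
    · right; rw [if_neg h]; push_cast; ring
  refine ⟨hmem, ?_⟩
  intro v hv
  -- notation
  set L := Fin.last K with hL
  -- vstar values
  have hvL : vstar L = M L := by rw [hvstar L, if_pos rfl]
  have hvk : ∀ k : Fin K, vstar k.castSucc = -(M k.castSucc) := by
    intro k
    rw [hvstar k.castSucc, if_neg (Fin.castSucc_lt_last k).ne]
  -- bounds for v
  have hvb : ∀ k, (1/2) * 2^(∑ ℓ ∈ Finset.Iio k, N ℓ) ≤ |v k| ∧ |v k| ≤ M k :=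
    fun k => pam_bounds N k (hv k)
  have hM_lb : ∀ k, (1/2) * 2^(∑ ℓ ∈ Finset.Iio k, N ℓ) ≤ M k := by
    intro k
    have hP : (0:ℝ) < 2^(∑ ℓ ∈ Finset.Iio k, N ℓ) := by positivity
    have h2p : (1:ℝ) ≤ (2:ℝ)^(N k - 1) := one_le_pow₀ (by norm_num)
    apply mul_le_mul_of_nonneg_right (by linarith) hP.le
  -- the telescoping sum: T = (2^(S L) - 1)/2
  set T : ℝ := ∑ k : Fin K, M k.castSucc with hT
  have hSval : ∀ k : Fin (K+1), ∑ ℓ ∈ Finset.Iio k, N ℓ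
      = ∑ i ∈ Finset.range k.val, (fun i => if h : i < K + 1 then N ⟨i, h⟩ else 0) i := by
    intro k
    rw [← Nat.Iio_eq_range, ← Fin.map_valEmbedding_Iio, Finset.sum_map]
    apply Finset.sum_congr rfl
    intro ℓ _
    simp [Fin.is_lt]
    intro h; have := ℓ.isLt; omega
  have hTval : T = ((2:ℝ)^(∑ ℓ ∈ Finset.Iio L, N ℓ) - 1)/2 := by
    set N' : ℕ → ℕ := fun i => if h : i < K + 1 then N ⟨i, h⟩ else 0 with hN'
    have key := tele_nat N' K (fun j hj => by
      simp only [hN', dif_pos (hj.trans (Nat.lt_succ_self K))]; exact hN _)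
    have hSL : ∑ ℓ ∈ Finset.Iio L, N ℓ = ∑ i ∈ Finset.range K, N' i := by
      rw [hL, hSval (Fin.last K)]; rfl
    rw [hT, hSL, ← key,
      ← Fin.sum_univ_eq_sum_range
        (fun j => ((2:ℝ)^(N' j - 1) - 1/2) * 2^(∑ i ∈ Finset.range j, N' i)) K]
    apply Finset.sum_congr rfl
    intro k _
    have hk : (k.castSucc : Fin (K+1)).val = k.val := rfl
    have hNk : N k.castSucc = N' k.val := by
      simp only [hN', dif_pos (Nat.lt_succ_of_lt k.isLt)]; rfl
    have hMk : M k.castSucc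
        = ((2:ℝ)^(N k.castSucc - 1) - 1/2) * 2^(∑ ℓ ∈ Finset.Iio k.castSucc, N ℓ) := rfl
    rw [hMk, hSval k.castSucc, hk, hNk]
  -- key quantities
  set A : ℝ := |v L| with hA
  set B : ℝ := M L with hB
  set t : ℝ := ∑ k : Fin K, |v k.castSucc| with ht
  -- basic inequalities
  have hAB : A ≤ B := (hvb L).2
  have hAlb : (1/2) * 2^(∑ ℓ ∈ Finset.Iio L, N ℓ) ≤ A := (hvb L).1
  have hBlb : (1/2) * 2^(∑ ℓ ∈ Finset.Iio L, N ℓ) ≤ B := hM_lb L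
  have hPL : (0:ℝ) < 2^(∑ ℓ ∈ Finset.Iio L, N ℓ) := by positivity
  have hTA : T < A := by rw [hTval]; linarith
  have hTB : T < B := by rw [hTval]; linarith
  have htT : t ≤ T := Finset.sum_le_sum (fun k _ => (hvb k.castSucc).2)
  have ht0 : (0:ℝ) ≤ t := Finset.sum_nonneg (fun k _ => abs_nonneg _)
  -- sum of v: |∑ v| ≥ A - t
  have hsum_split : ∑ k, v k = (∑ k : Fin K, v k.castSucc) + v L :=
    Fin.sum_univ_castSucc v
  have hu : |∑ k : Fin K, v k.castSucc| ≤ t :=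
    Finset.abs_sum_le_sum_abs _ _
  have hs_lb : A - t ≤ |∑ k, v k| := by
    rw [hsum_split]
    have key : |v L| ≤ |(∑ k : Fin K, v k.castSucc) + v L| + |∑ k : Fin K, v k.castSucc| := by
      calc |v L| = |((∑ k : Fin K, v k.castSucc) + v L) - (∑ k : Fin K, v k.castSucc)| := by
            congr 1; ring
      _ ≤ _ := abs_sub _ _
    rw [hA]; linarith
  -- square bound
  have hAt : 0 ≤ A - t := by linarith
  have hs_sq : (A - t)^2 ≤ (∑ k, v k)^2 := by
    have := pow_le_pow_left₀ hAt hs_lb 2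
    rwa [sq_abs] at this
  -- sums of squares
  set Qa : ℝ := ∑ k : Fin K, (v k.castSucc)^2 with hQa
  set QM : ℝ := ∑ k : Fin K, (M k.castSucc)^2 with hQM
  have hQ : Qa ≤ QM := by
    apply Finset.sum_le_sum
    intro k _
    have h1 := (hvb k.castSucc).2
    have h2 := abs_nonneg (v k.castSucc)
    nlinarith [sq_abs (v k.castSucc)]
  have hsq_split : ∑ k, (v k)^2 = Qa + A^2 := by
    rw [Fin.sum_univ_castSucc (f := fun k => (v k)^2), hA, sq_abs]
  -- fSix of vstar
  have hvstar_sum : ∑ k, vstar k = B - T := by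
    rw [Fin.sum_univ_castSucc vstar, hvL, hT]
    rw [show ∑ k : Fin K, vstar k.castSucc = ∑ k : Fin K, -(M k.castSucc) from
      Finset.sum_congr rfl (fun k _ => hvk k)]
    rw [Finset.sum_neg_distrib]
    ring
  have hvstar_sq : ∑ k, (vstar k)^2 = QM + B^2 := by
    rw [Fin.sum_univ_castSucc (f := fun k => (vstar k)^2), hvL, hQM]
    congr 1
    apply Finset.sum_congr rfl
    intro k _
    rw [hvk k]; ring
  rw [fSix_eq, fSix_eq, hvstar_sum, hvstar_sq, hsq_split]
  have hfinal : (B - T)^2 - (QM + B^2) ≤ (A - t)^2 - (Qa + A^2) := by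
    nlinarith [mul_nonneg (sub_nonneg.2 htT) (by linarith : (0:ℝ) ≤ 2*B - T - t),
      mul_nonneg ht0 (sub_nonneg.2 hAB), hQ]
  nlinarith [hs_sq]
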